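/- For n ≥ 5, the squared n-cycle C_n² contains no induced subgraph isomorphic to K_{1,1,3} when n ≥ 7; equivalently, C_n² for n ≥ 7 has no vertex whose neighbourhood contains a triangle all of whose vertices have two common neighbours. -/

import Mathlib

private lemma zmod_cast_inj_small (n : ℕ) (hn : 7 ≤ n) (a b : ℤ)
    (h1 : a - b < 7) (h2 : b - a < 7) (h : (a : ZMod n) = (b : ZMod n)) :
    a = b := by
  have hn7 : (7 : ℤ) ≤ (n : ℤ) := by exact_mod_cast hn
  have hd : (n : ℤ) ∣ b - a := ((ZMod.intCast_eq_intCast_iff a b n).mp h).dvd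
  have h0 : b - a = 0 :=
    Int.eq_zero_of_abs_lt_dvd hd (abs_lt.mpr ⟨by omega, by omega⟩)
  omega

private lemma zmod_step (n : ℕ) (hn : 7 ≤ n) (mk me : ℤ)
    (hk : mk = 1 ∨ mk = 2 ∨ mk = -1 ∨ mk = -2)
    (he : me = 1 ∨ me = 2 ∨ me = -1 ∨ me = -2)
    (h : ((mk - me : ℤ) : ZMod n) = 1 ∨ ((mk - me : ℤ) : ZMod n) = 2 ∨
      ((mk - me : ℤ) : ZMod n) = -1 ∨ ((mk - me : ℤ) : ZMod n) = -2) :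
    mk - me = 1 ∨ mk - me = 2 ∨ mk - me = -1 ∨ mk - me = -2 := by
  rcases h with h | h | h | h
  · refine Or.inl (zmod_cast_inj_small n hn (mk - me) 1 (by omega) (by omega) ?_)
    push_cast at h ⊢; exact h
  · refine Or.inr (Or.inl (zmod_cast_inj_small n hn (mk - me) 2 (by omega) (by omega) ?_))
    push_cast at h ⊢; exact h
  · refine Or.inr (Or.inr (Or.inl
      (zmod_cast_inj_small n hn (mk - me) (-1) (by omega) (by omega) ?_)))
    push_cast at h ⊢; exact h
  · refine Or.inr (Or.inr (Or.inr
      (zmod_cast_inj_small n hn (mk - me) (-2) (by omega) (by omega) ?_)))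
    push_cast at h ⊢; exact h


/-- For `n ≥ 7`, the squared `n`-cycle contains no induced subgraph isomorphic
to `K_{1,1,3}`. -/
theorem squared_cycle_no_induced_K113 (n : ℕ) (hn : 7 ≤ n) :
    IsEmpty ((SimpleGraph.completeMultipartiteGraph ![Fin 1, Fin 1, Fin 3]) ↪g
      (SimpleGraph.fromRel (fun i j : ZMod n => i - j = 1 ∨ i - j = 2))) := by
  constructor
  intro f
  -- adjacency in the host graph gives small differences
  have hadj : ∀ u v : (i : Fin 3) × ![Fin 1, Fin 1, Fin 3] i, u.1 ≠ v.1 →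
      f u - f v = 1 ∨ f u - f v = 2 ∨ f u - f v = -1 ∨ f u - f v = -2 := by
    intro u v h
    have h' := f.map_rel_iff.mpr (h : (SimpleGraph.completeMultipartiteGraph
      ![Fin 1, Fin 1, Fin 3]).Adj u v)
    rw [SimpleGraph.fromRel_adj] at h'
    obtain ⟨-, (h'' | h'') | (h'' | h'')⟩ := h'
    · exact Or.inl h''
    · exact Or.inr (Or.inl h'')
    · refine Or.inr (Or.inr (Or.inl ?_)); linear_combination -h''
    · refine Or.inr (Or.inr (Or.inr ?_)); linear_combination -h''
  set a : ZMod n := f ⟨0, (0 : Fin 1)⟩ with ha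
  set b : ZMod n := f ⟨1, (0 : Fin 1)⟩ with hb
  set c : Fin 3 → ZMod n := fun k => f ⟨2, (k : Fin 3)⟩ with hc
  have hab : b - a = 1 ∨ b - a = 2 ∨ b - a = -1 ∨ b - a = -2 :=
    hadj ⟨1, (0 : Fin 1)⟩ ⟨0, (0 : Fin 1)⟩ (by decide)
  have hca : ∀ k, c k - a = 1 ∨ c k - a = 2 ∨ c k - a = -1 ∨ c k - a = -2 :=
    fun k => hadj ⟨2, (k : Fin 3)⟩ ⟨0, (0 : Fin 1)⟩ (show (2:Fin 3) ≠ 0 by decide)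
  have hcb : ∀ k, c k - b = 1 ∨ c k - b = 2 ∨ c k - b = -1 ∨ c k - b = -2 :=
    fun k => hadj ⟨2, (k : Fin 3)⟩ ⟨1, (0 : Fin 1)⟩ (show (2:Fin 3) ≠ 1 by decide)
  have hcc : ∀ k l : Fin 3, k ≠ l → c k ≠ c l := by
    intro k l hkl h
    exact hkl (eq_of_heq (Sigma.mk.inj_iff.mp (f.injective h)).2)
  -- lift to integers
  have lift : ∀ x : ZMod n, (x = 1 ∨ x = 2 ∨ x = -1 ∨ x = -2) →
      ∃ m : ℤ, x = (m : ZMod n) ∧ (m = 1 ∨ m = 2 ∨ m = -1 ∨ m = -2) := by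
    rintro x (h | h | h | h)
    exacts [⟨1, by simpa using h, by omega⟩, ⟨2, by simpa using h, by omega⟩,
      ⟨-1, by simpa using h, by omega⟩, ⟨-2, by simpa using h, by omega⟩]
  obtain ⟨me, hme, hmeS⟩ := lift _ hab
  obtain ⟨m0, hm0, hm0S⟩ := lift _ (hca 0)
  obtain ⟨m1, hm1, hm1S⟩ := lift _ (hca 1)
  obtain ⟨m2, hm2, hm2S⟩ := lift _ (hca 2)
  have hdiff : ∀ k (mk : ℤ), c k - a = (mk : ZMod n) →
      c k - b = ((mk - me : ℤ) : ZMod n) := by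
    intro k mk h
    push_cast
    rw [← h, ← hme]; ring
  have g0 := zmod_step n hn m0 me hm0S hmeS (by rw [← hdiff 0 m0 hm0]; exact hcb 0)
  have g1 := zmod_step n hn m1 me hm1S hmeS (by rw [← hdiff 1 m1 hm1]; exact hcb 1)
  have g2 := zmod_step n hn m2 me hm2S hmeS (by rw [← hdiff 2 m2 hm2]; exact hcb 2)
  have ne' : ∀ (k l : Fin 3) (mk ml : ℤ), k ≠ l → c k - a = (mk : ZMod n) →
      c l - a = (ml : ZMod n) → mk ≠ ml := by
    intro k l mk ml hkl hk hl h
    apply hcc k l hkl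
    have : c k - a = c l - a := by rw [hk, hl, h]
    exact sub_left_inj.mp this
  have ne01 := ne' 0 1 m0 m1 (by decide) hm0 hm1
  have ne02 := ne' 0 2 m0 m2 (by decide) hm0 hm2
  have ne12 := ne' 1 2 m1 m2 (by decide) hm1 hm2
  omega
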